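/- If A is a nonempty clopen subset of the complete Erdős space 𝔈 (with its subspace topology inherited from ℓ²), then the set of norms {‖x‖ : x ∈ A} is unbounded above: for every M ∈ ℝ there exists x ∈ A with ‖x‖ > M. -/

import Mathlib

noncomputable section ErdosAux

open Metric Filter Topology ENNReal

/-- The complete Erdős space: the set of points of `ℓ²` all of whose coordinates lie in
`{0} ∪ {1/n : n ∈ ℕ, n ≥ 1}`. -/
def ErdosSpace : Set (lp (fun _ : ℕ => ℝ) 2) :=
  {x | ∀ i : ℕ, (x : ∀ _ : ℕ, ℝ) i = 0 ∨ ∃ n : ℕ, 0 < n ∧ (x : ∀ _ : ℕ, ℝ) i = 1 / n}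

namespace ErdosAux

abbrev EE := lp (fun _ : ℕ => ℝ) 2

def SVals : Set ℝ := Set.range fun n : ℕ => 1 / (n : ℝ)

lemma mem_SVals_iff (t : ℝ) : t ∈ SVals ↔ (t = 0 ∨ ∃ n : ℕ, 0 < n ∧ t = 1 / n) := by
  constructor
  · rintro ⟨n, rfl⟩
    rcases Nat.eq_zero_or_pos n with h | h
    · subst h; left; simp
    · right; exact ⟨n, h, rfl⟩
  · rintro (rfl | ⟨n, hn, rfl⟩)
    · exact ⟨0, by simp⟩
    · exact ⟨n, rfl⟩

lemma SVals_closed : IsClosed SVals := by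
  have ht : Filter.Tendsto (fun n : ℕ => 1 / (n : ℝ)) atTop (𝓝 0) :=
    tendsto_one_div_atTop_nhds_zero_nat
  have hc := ht.isCompact_insert_range
  have h2 : insert (0:ℝ) (Set.range fun n : ℕ => 1 / (n : ℝ)) = SVals :=
    Set.insert_eq_self.2 ⟨0, by simp⟩
  rw [h2] at hc
  exact hc.isClosed

lemma SVals_nonneg {t : ℝ} (h : t ∈ SVals) : 0 ≤ t := by
  rcases h with ⟨n, rfl⟩; positivity

lemma continuous_eval (i : ℕ) : Continuous fun f : EE => f i := by
  apply LipschitzWith.continuous (K := 1)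
  intro f g
  rw [edist_dist, edist_dist]
  simp only [ENNReal.coe_one, one_mul]
  apply ENNReal.ofReal_le_ofReal
  rw [dist_eq_norm, dist_eq_norm]
  exact lp.norm_apply_le_norm (by norm_num) (f - g) i

lemma erdos_eq : ErdosSpace = ⋂ i, (fun f : EE => f i) ⁻¹' SVals := by
  ext x
  simp only [ErdosSpace, Set.mem_setOf_eq, Set.mem_iInter, Set.mem_preimage]
  exact forall_congr' fun i => (mem_SVals_iff (x i)).symm

lemma erdos_closed : IsClosed ErdosSpace := by
  rw [erdos_eq]
  exact isClosed_iInter fun i => SVals_closed.preimage (continuous_eval i)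

lemma erdos_nonneg {x : EE} (hx : x ∈ ErdosSpace) (i : ℕ) : 0 ≤ x i := by
  apply SVals_nonneg
  rw [mem_SVals_iff]
  exact hx i

def upd (x : EE) (i : ℕ) (v : ℝ) : EE := x + lp.single 2 i (v - x i)

lemma upd_apply_self (x : EE) (i : ℕ) (v : ℝ) : upd x i v i = v := by
  simp [upd, lp.coeFn_add, lp.single_apply_self]

lemma upd_apply_ne (x : EE) (i : ℕ) (v : ℝ) {j : ℕ} (hj : j ≠ i) : upd x i v j = x j := by
  simp [upd, lp.coeFn_add, lp.single_apply_ne 2 i _ hj, Pi.single_apply, hj]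

lemma norm_upd_sub (x : EE) (i : ℕ) (v : ℝ) : ‖upd x i v - x‖ = |v - x i| := by
  have h : upd x i v - x = lp.single 2 i (v - x i) := by simp [upd]
  rw [h]
  have := lp.norm_single (E := fun _ : ℕ => ℝ) (p := 2) (by norm_num) i (v - x i)
  simpa [Real.norm_eq_abs] using this

lemma norm_sq_eq (f : EE) : ‖f‖ ^ 2 = ∑' i, (f i) ^ 2 := by
  have h := lp.norm_rpow_eq_tsum (p := 2) (by norm_num) f
  have h2 : ((2:ℝ≥0∞)).toReal = (2:ℝ) := by norm_num
  rw [h2] at h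
  calc ‖f‖ ^ 2 = ‖f‖ ^ (2:ℝ) := by rw [← Real.rpow_natCast]; norm_num
  _ = ∑' i, ‖f i‖ ^ (2:ℝ) := h
  _ = ∑' i, (f i)^2 := by
      congr 1; ext i
      rw [show ((2:ℝ)) = ((2:ℕ):ℝ) by norm_num, Real.rpow_natCast,
        Real.norm_eq_abs, sq_abs]

lemma summable_sq (f : EE) : Summable fun i => (f i) ^ 2 := by
  have := lp.memℓp f
  have hs := this.summable (p := 2) (by norm_num)
  have h2 : ((2:ℝ≥0∞)).toReal = (2:ℝ) := by norm_num
  rw [h2] at hs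
  convert hs using 2 with i
  rw [show ((2:ℝ)) = ((2:ℕ):ℝ) by norm_num, Real.rpow_natCast, Real.norm_eq_abs, sq_abs]

lemma norm_sq_upd (x : EE) (i : ℕ) (v : ℝ) :
    ‖upd x i v‖ ^ 2 = ‖x‖ ^ 2 + (v ^ 2 - (x i) ^ 2) := by
  rw [norm_sq_eq, norm_sq_eq]
  have key : ∀ j, (upd x i v j) ^ 2 = (x j) ^ 2 + (if j = i then v ^ 2 - (x i) ^ 2 else 0) := by
    intro j
    by_cases hj : j = i
    · subst hj; rw [upd_apply_self, if_pos rfl]; ring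
    · rw [upd_apply_ne x i v hj, if_neg hj]; ring
  calc ∑' j, (upd x i v j) ^ 2
      = ∑' j, ((x j) ^ 2 + (if j = i then v ^ 2 - (x i) ^ 2 else 0)) := tsum_congr key
    _ = (∑' j, (x j) ^ 2) + ∑' j, (if j = i then v ^ 2 - (x i) ^ 2 else 0) := by
        refine Summable.tsum_add (summable_sq x) ?_
        exact summable_of_ne_finset_zero (s := {i}) (by intro j hj; simp at hj; simp [hj])
    _ = (∑' j, (x j) ^ 2) + (v ^ 2 - (x i) ^ 2) := by rw [tsum_ite_eq]

lemma exists_val_pick {δ : ℝ} (h0 : 0 < δ) (h1 : δ ≤ 1) :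
    ∃ m : ℕ, 0 < m ∧ δ / 4 ≤ 1 / (m:ℝ) ∧ 1 / (m:ℝ) ≤ δ / 2 := by
  set u : ℝ := 4 / δ with hu
  have hu4 : 4 ≤ u := by rw [hu]; rw [le_div_iff₀ h0]; linarith
  have hone : (1:ℝ) ≤ ⌊u⌋₊ := by
    have := Nat.le_floor (α := ℝ) (n := 1) (by push_cast; linarith)
    exact_mod_cast this
  have hflpos : (0:ℝ) < ⌊u⌋₊ := by linarith
  refine ⟨⌊u⌋₊, by exact_mod_cast hflpos, ?_, ?_⟩
  · have hfl : (⌊u⌋₊ : ℝ) ≤ u := Nat.floor_le (by positivity)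
    rw [div_le_div_iff₀ (by linarith) hflpos]
    have : δ * u = 4 := by rw [hu]; field_simp
    nlinarith
  · have hfl2 : u - 1 ≤ (⌊u⌋₊ : ℝ) := by
      have := Nat.sub_one_lt_floor u
      linarith
    rw [div_le_div_iff₀ hflpos (by linarith)]
    have h2u : u / 2 ≤ (⌊u⌋₊:ℝ) := by linarith
    have : δ * u = 4 := by rw [hu]; field_simp
    nlinarith

lemma exists_coord_lt (x : EE) {ε : ℝ} (hε : 0 < ε) : ∃ i, |x i| < ε := by
  have h := (summable_sq x).tendsto_cofinite_zero
  have h2 : ∀ᶠ i in Filter.cofinite, (x i)^2 < ε^2 :=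
    h.eventually (gt_mem_nhds (by positivity))
  obtain ⟨i, hi⟩ := h2.exists
  refine ⟨i, ?_⟩
  by_contra hc
  push_neg at hc
  nlinarith [sq_abs (x i), abs_nonneg (x i)]

/-- One improvement step: inside an "open ball of radius δ stays in B" situation we can
increase the squared norm by a definite amount, moving up coordinatewise. -/
lemma step {B : Set EE} (hBE : B ⊆ ErdosSpace) {x : EE} (hx : x ∈ B) {δ : ℝ}
    (hδ0 : 0 < δ) (hδ1 : δ ≤ 1)
    (hball : ∀ y : EE, y ∈ ErdosSpace → ‖y - x‖ < δ → y ∈ B) :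
    ∃ x' : EE, x' ∈ B ∧ (∀ j, x j ≤ x' j) ∧ ‖x‖ ^ 2 + δ ^ 2 / 64 ≤ ‖x'‖ ^ 2 := by
  obtain ⟨m, hm, hm1, hm2⟩ := exists_val_pick hδ0 hδ1
  obtain ⟨i, hi⟩ := exists_coord_lt x (show (0:ℝ) < δ/8 by linarith)
  have hxnn : 0 ≤ x i := erdos_nonneg (hBE hx) i
  have hxi : x i < δ/8 := by rwa [abs_of_nonneg hxnn] at hi
  set v : ℝ := 1 / (m:ℝ) with hv
  have hvpos : 0 < v := by positivity
  have hxiv : x i < v := by linarith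
  refine ⟨upd x i v, ?_, ?_, ?_⟩
  · apply hball
    · intro j
      by_cases hj : j = i
      · subst hj; rw [upd_apply_self]; right; exact ⟨m, hm, rfl⟩
      · rw [upd_apply_ne x i v hj]; exact hBE hx j
    · rw [norm_upd_sub, abs_of_nonneg (by linarith)]
      linarith
  · intro j
    by_cases hj : j = i
    · subst hj; rw [upd_apply_self]; linarith
    · rw [upd_apply_ne x i v hj]
  · rw [norm_sq_upd]
    nlinarith

/-- Comparison of norms for coordinatewise-ordered nonnegative elements. -/
lemma norm_sub_sq_le {x y : EE} (h0 : ∀ i, 0 ≤ y i) (h : ∀ i, y i ≤ x i) :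
    ‖x - y‖ ^ 2 ≤ ‖x‖ ^ 2 - ‖y‖ ^ 2 := by
  rw [norm_sq_eq, norm_sq_eq, norm_sq_eq]
  rw [← Summable.tsum_sub (summable_sq x) (summable_sq y)]
  refine Summable.tsum_le_tsum ?_ ?_ ((summable_sq x).sub (summable_sq y))
  · intro i
    have hxy : ((x - y : EE) : ∀ _ : ℕ, ℝ) i = x i - y i := by
      simp [lp.coeFn_sub]
    rw [hxy]
    nlinarith [h0 i, h i]
  · have : Summable fun i => ((x - y : EE) i) ^ 2 := summable_sq (x - y)
    exact this

/-- Main auxiliary contradiction lemma. -/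
lemma main_aux {B : Set EE} (hBE : B ⊆ ErdosSpace) (hBclosed : IsClosed B)
    (d : EE → ℝ) (hd1 : ∀ x ∈ B, 0 < d x ∧ d x ≤ 1)
    (hd2 : ∀ x ∈ B, ∀ y : EE, y ∈ ErdosSpace → ‖y - x‖ < d x → y ∈ B)
    (hd3 : ∀ y ∈ B, ∀ x ∈ B, ‖x - y‖ < d y / 2 → d y / 2 ≤ d x)
    {x0 : EE} (hx0 : x0 ∈ B) {M : ℝ} (hM : ∀ x ∈ B, ‖x‖ ≤ M) : False := by
  haveI : Fact ((1:ℝ≥0∞) ≤ 2) := ⟨by norm_num⟩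
  have hstep : ∀ z : {z : EE // z ∈ B}, ∃ w : {z : EE // z ∈ B},
      (∀ j, z.1 j ≤ w.1 j) ∧ ‖z.1‖ ^ 2 + (d z.1) ^ 2 / 64 ≤ ‖w.1‖ ^ 2 := by
    rintro ⟨z, hz⟩
    obtain ⟨h1, h2⟩ := hd1 z hz
    obtain ⟨x', hx', hmono, hgain⟩ := step hBE hz h1 h2 (hd2 z hz)
    exact ⟨⟨x', hx'⟩, hmono, hgain⟩
  choose F hF1 hF2 using hstep
  set u : ℕ → {z : EE // z ∈ B} := fun n => F^[n] ⟨x0, hx0⟩ with hu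
  have hsucc : ∀ n, u (n+1) = F (u n) := fun n => Function.iterate_succ_apply' F n _
  set s : ℕ → ℝ := fun n => ‖(u n).1‖ ^ 2 with hs
  have hmono1 : ∀ n j, (u n).1 j ≤ (u (n+1)).1 j := by
    intro n j
    have h2 := hF1 (u n) j
    rwa [← hsucc n] at h2
  have hmono : ∀ m n, m ≤ n → ∀ j, (u m).1 j ≤ (u n).1 j := by
    intro m n hmn j
    induction n, hmn using Nat.le_induction with
    | base => exact le_rfl
    | succ n hmn ih => exact le_trans ih (hmono1 n j)
  have hgain : ∀ n, s n + (d (u n).1) ^ 2 / 64 ≤ s (n+1) := by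
    intro n
    have := hF2 (u n)
    rw [← hsucc n] at this
    exact this
  have hsmono : Monotone s := by
    apply monotone_nat_of_le_succ
    intro n
    have h1 := hgain n
    have h2 := (hd1 _ (u n).2).1
    nlinarith
  have hsbdd : ∀ n, s n ≤ (max M 0) ^ 2 := by
    intro n
    have h1 := hM _ (u n).2
    have h2 : ‖(u n).1‖ ≤ max M 0 := le_trans h1 (le_max_left _ _)
    have h3 : (0:ℝ) ≤ max M 0 := le_max_right _ _
    have h4 : s n = ‖(u n).1‖ ^ 2 := rfl
    nlinarith [norm_nonneg (u n).1]
  -- s converges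
  obtain ⟨L, hL⟩ : ∃ L, Filter.Tendsto s atTop (𝓝 L) :=
    ⟨_, tendsto_atTop_ciSup hsmono ⟨(max M 0)^2, fun _ ⟨n, hn⟩ => hn ▸ hsbdd n⟩⟩
  have hsL : ∀ n, s n ≤ L := fun n => hsmono.ge_of_tendsto hL n
  -- Cauchy
  have hnn : ∀ n j, 0 ≤ (u n).1 j := fun n j => erdos_nonneg (hBE (u n).2) j
  have hdiff : ∀ m n, m ≤ n → ‖(u n).1 - (u m).1‖ ^ 2 ≤ s n - s m := by
    intro m n hmn
    exact norm_sub_sq_le (hnn m) (hmono m n hmn)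
  have hcauchy : CauchySeq (fun n => (u n).1) := by
    apply cauchySeq_of_le_tendsto_0 (fun N => Real.sqrt (L - s N))
    · intro n m N hn hm
      rcases le_total m n with h | h
      · rw [dist_eq_norm]
        have h1 := hdiff m n h
        have h2 : ‖(u n).1 - (u m).1‖ ^ 2 ≤ L - s N := by
          have := hsmono hm
          have := hsL n
          linarith
        calc ‖(u n).1 - (u m).1‖ = Real.sqrt (‖(u n).1 - (u m).1‖ ^ 2) := by
              rw [Real.sqrt_sq (norm_nonneg _)]
        _ ≤ Real.sqrt (L - s N) := Real.sqrt_le_sqrt h2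
      · rw [dist_eq_norm, ← norm_neg]
        have h1 := hdiff n m h
        have h2 : ‖(u m).1 - (u n).1‖ ^ 2 ≤ L - s N := by
          have := hsmono hn
          have := hsL m
          linarith
        calc ‖-((u n).1 - (u m).1)‖ = ‖(u m).1 - (u n).1‖ := by rw [neg_sub]
        _ = Real.sqrt (‖(u m).1 - (u n).1‖ ^ 2) := by rw [Real.sqrt_sq (norm_nonneg _)]
        _ ≤ Real.sqrt (L - s N) := Real.sqrt_le_sqrt h2
    · have : Filter.Tendsto (fun N => L - s N) atTop (𝓝 (L - L)) :=
        (tendsto_const_nhds.sub hL)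
      rw [sub_self] at this
      have h0 : Filter.Tendsto (fun N => Real.sqrt (L - s N)) atTop (𝓝 (Real.sqrt 0)) :=
        (Real.continuous_sqrt.continuousAt).tendsto.comp this
      rwa [Real.sqrt_zero] at h0
  obtain ⟨y, hy⟩ := cauchySeq_tendsto_of_complete hcauchy
  have hyB : y ∈ B := hBclosed.mem_of_tendsto hy (Filter.Eventually.of_forall fun n => (u n).2)
  obtain ⟨hdy0, hdy1⟩ := hd1 y hyB
  -- eventually close to y
  have hclose : ∀ᶠ n in atTop, ‖(u n).1 - y‖ < d y / 2 := by
    have := hy.sub_const y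
    rw [sub_self] at this
    have h2 := this.norm
    rw [norm_zero] at h2
    exact h2.eventually (gt_mem_nhds (by linarith))
  -- gains eventually small
  have hgain0 : Filter.Tendsto (fun n => s (n+1) - s n) atTop (𝓝 0) := by
    have h1 : Filter.Tendsto (fun n => s (n+1)) atTop (𝓝 L) := hL.comp (tendsto_add_atTop_nat 1)
    have := h1.sub hL
    rwa [sub_self] at this
  have hsmall : ∀ᶠ n in atTop, s (n+1) - s n < (d y / 2) ^ 2 / 64 := by
    refine hgain0.eventually (gt_mem_nhds ?_)
    positivity
  obtain ⟨n, h1, h2⟩ := (hclose.and hsmall).exists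
  have h3 : d y / 2 ≤ d (u n).1 := hd3 y hyB _ (u n).2 h1
  have h4 := hgain n
  nlinarith

end ErdosAux

end ErdosAux

open ErdosAux Metric Filter Topology ENNReal in
/-- If `A` is a nonempty clopen subset of the complete Erdős space (with the subspace topology
from `ℓ²`), then the set of norms `{‖x‖ : x ∈ A}` is unbounded above. -/
theorem stmt1 (A : Set ↥ErdosSpace) (hA : IsClopen A) (hne : A.Nonempty) :
    ∀ M : ℝ, ∃ x ∈ A, M < ‖(x : ↥ErdosSpace).val‖ := by
  by_contra hcon
  push_neg at hcon
  obtain ⟨M, hM⟩ := hcon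
  classical
  set B : Set EE := Subtype.val '' A with hB
  have hBE : B ⊆ ErdosSpace := by
    rintro _ ⟨⟨x, hx⟩, _, rfl⟩; exact hx
  have hval : Topology.IsClosedEmbedding (Subtype.val : ↥ErdosSpace → EE) :=
    erdos_closed.isClosedEmbedding_subtypeVal
  have hBclosed : IsClosed B := hval.isClosedMap _ hA.isClosed
  have hMB : ∀ x ∈ B, ‖x‖ ≤ M := by
    rintro _ ⟨a, ha, rfl⟩; exact hM a ha
  obtain ⟨a0, ha0⟩ := hne
  have hx0 : (a0 : EE) ∈ B := ⟨a0, ha0, rfl⟩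
  set C : Set EE := ErdosSpace \ B with hC
  have hCclosed : IsClosed C := by
    have : C = Subtype.val '' Aᶜ := by
      ext z
      constructor
      · rintro ⟨hz1, hz2⟩
        exact ⟨⟨z, hz1⟩, fun hmem => hz2 ⟨⟨z, hz1⟩, hmem, rfl⟩, rfl⟩
      · rintro ⟨⟨z, hz⟩, hz2, rfl⟩
        refine ⟨hz, fun hmem => hz2 ?_⟩
        obtain ⟨b, hb, hbe⟩ := hmem
        have : b = ⟨z, hz⟩ := Subtype.ext hbe
        rwa [this] at hb
    rw [this]
    exact hval.isClosedMap _ hA.isOpen.isClosed_compl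
  have hcompl : ∀ z : EE, z ∈ ErdosSpace → z ∉ C → z ∈ B := by
    intro z hz1 hz2
    by_contra h
    exact hz2 ⟨hz1, h⟩
  rcases C.eq_empty_or_nonempty with hCe | hCne
  · -- C empty : all of Erdos space is in B, use d ≡ 1
    refine main_aux hBE hBclosed (fun _ => 1) (fun x _ => ⟨one_pos, le_rfl⟩) ?_ ?_ hx0 hMB
    · intro x hx y hy _
      apply hcompl y hy
      rw [hCe]
      exact Set.notMem_empty y
    · intro y _ x _ _; norm_num
  · -- C nonempty
    set d : EE → ℝ := fun x => min (infDist x C) 1 with hd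
    refine main_aux hBE hBclosed d ?_ ?_ ?_ hx0 hMB
    · intro x hx
      constructor
      · apply lt_min _ one_pos
        rw [← hCclosed.notMem_iff_infDist_pos hCne]
        intro hmem
        exact hmem.2 hx
      · exact min_le_right _ _
    · intro x hx y hy hlt
      apply hcompl y hy
      apply notMem_of_dist_lt_infDist (x := x)
      rw [dist_comm, dist_eq_norm]
      calc ‖y - x‖ < d x := hlt
      _ ≤ infDist x C := min_le_left _ _
    · intro y hy x hx hlt
      have h1 : infDist y C ≤ infDist x C + dist y x := infDist_le_infDist_add_dist
      have h2 : dist y x < d y / 2 := by rwa [dist_comm, dist_eq_norm]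
      have h3 : d y ≤ infDist y C := min_le_left (infDist y C) 1
      have h4 : d y ≤ 1 := min_le_right (infDist y C) 1
      have h5 : d y / 2 ≤ infDist x C := by linarith
      have h6 : d y / 2 ≤ 1 := by linarith
      exact le_min h5 h6
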